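/- The constructed instance I′ has a feasible solution if and only if the arrears instance is a yes-instance, i.e., there exist integers z_1,…,z_n with 1 ≤ z_i ≤ |S_i| such that Σ_{i : a_{i,z_i} ≤ b_j} p_{i,z_i} ≤ q_j for every j = 1,…,m. -/

import Mathlib

noncomputable local instance : DecidableEq ℝ := Classical.decEq ℝ

/-- The distance function on a spider with legs indexed by `Λ`. -/
noncomputable def spiderDist {Λ : Type*} [DecidableEq Λ] (P Q : Λ × ℝ) : ℝ :=
  if P.1 = Q.1 then |P.2 - Q.2| else P.2 + Q.2

theorem spiderDist_same {Λ : Type*} [DecidableEq Λ] (l : Λ) (x y : ℝ) :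
    spiderDist (l, x) (l, y) = |x - y| := if_pos rfl

theorem spiderDist_ne {Λ : Type*} [DecidableEq Λ] {l l' : Λ} (h : l ≠ l') (x y : ℝ) :
    spiderDist (l, x) (l', y) = x + y := if_neg h

/-- telescoping over `Ico`. -/
theorem tele_Ico (f : ℕ → ℕ) (hf : Monotone f) :
    ∀ n z, z ≤ n → ∑ t ∈ Finset.Ico z n, (f (t + 1) - f t) = f n - f z := by
  intro n
  induction n with
  | zero => intro z hz; interval_cases z; simp
  | succ n ih =>
    intro z hz
    rcases Nat.eq_or_lt_of_le hz with h | h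
    · subst h; simp
    · have hz' : z ≤ n := by omega
      rw [Finset.sum_Ico_succ_top hz', ih z hz']
      have h1 := hf hz'
      have h2 := hf (Nat.le_succ n)
      simp only [Nat.succ_eq_add_one] at *
      omega

theorem tele_prefix (f : ℕ → ℕ) (hf : Monotone f) (t : ℕ) :
    ∑ j ∈ Finset.range (t + 1), (f j - (if j = 0 then 0 else f (j - 1))) = f t := by
  induction t with
  | zero => simp
  | succ t ih =>
    rw [Finset.sum_range_succ, ih, if_neg (Nat.succ_ne_zero t)]
    have h1 : f t ≤ f (t + 1) := hf (Nat.le_succ t)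
    simp only [Nat.add_sub_cancel]
    omega

/-- counting a sum of multisets. -/
theorem countP_msum {α : Type*} (p : α → Prop) [DecidablePred p] (S : Multiset (Multiset α)) :
    S.sum.countP p = (S.map (Multiset.countP p)).sum := by
  induction S using Multiset.induction with
  | empty => simp
  | cons a S ih => simp [Multiset.countP_add, ih]

theorem sum_map_filter_eq {α : Type*} (Q : α → Prop) [DecidablePred Q] (f : α → ℕ)
    (S : Multiset α) :
    ((S.filter Q).map f).sum = (S.map fun C => if Q C then f C else 0).sum := by
  induction S using Multiset.induction with
  | empty => simp
  | cons a S ih =>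
    by_cases h : Q a <;> simp [Multiset.filter_cons, h, ih]

theorem sum_finsum_swap {α β : Type*} (s : Finset β) (h : β → α → ℕ) (S : Multiset α) :
    ∑ i ∈ s, (S.map (h i)).sum = (S.map fun C => ∑ i ∈ s, h i C).sum := by
  induction S using Multiset.induction with
  | empty => simp
  | cons a S ih => simp [Finset.sum_add_distrib, ih]

theorem countP_eq_sum_count {α : Type*} [DecidableEq α] {N : ℕ} (e : Fin N → α)
    (he : Function.Injective e) (p : α → Prop) [DecidablePred p]
    (hp : ∀ u, p u ↔ ∃ k, u = e k) (s : Multiset α) :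
    s.countP p = ∑ k, s.count (e k) := by
  induction s using Multiset.induction with
  | empty => simp
  | cons a s ih =>
    rw [Multiset.countP_cons]
    simp only [Multiset.count_cons]
    rw [Finset.sum_add_distrib, ← ih]
    congr 1
    by_cases h : p a
    · obtain ⟨k, rfl⟩ := (hp a).1 h
      rw [if_pos h, Finset.sum_eq_single k]
      · simp
      · intro k' _ hk'; simp only [ite_eq_right_iff]; intro he'; exact absurd (he he'.symm) (Ne.symm hk')
      · simp
    · rw [if_neg h, Finset.sum_eq_zero]
      intro k _
      rw [if_neg]
      rintro rfl
      exact h ((hp _).2 ⟨k, rfl⟩)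

theorem card_sigma_filter_fst {n : ℕ} {N : Fin n → ℕ} (c : Fin n → Prop) [DecidablePred c] :
    ((Finset.univ : Finset (Σ i, Fin (N i))).filter (fun x => c x.1)).card
      = ∑ i, if c i then N i else 0 := by
  have : (Finset.univ.filter fun x : Σ i, Fin (N i) => c x.1)
      = (Finset.univ.filter c).sigma (fun _ => Finset.univ) := by
    ext x; simp [Finset.mem_sigma]
  rw [this, Finset.card_sigma]
  simp [Finset.sum_filter]

/-- An instance of the arrears problem: payment duties
`S i = {(a i 0, p i 0), …, (a i (sz i), p i (sz i))}` (so `|S i| = sz i + 1`),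
with strictly increasing payment dates and amounts, and budget constraints
`(b j, q j)`, strictly increasing, all positive, with the last budget date
at least every payment date. -/
structure ArrearsInstance where
  n : ℕ
  m : ℕ
  npos : 0 < n
  mpos : 0 < m
  sz : Fin n → ℕ
  a : (i : Fin n) → Fin (sz i + 1) → ℕ
  p : (i : Fin n) → Fin (sz i + 1) → ℕ
  amono : ∀ i, StrictMono (a i)
  pmono : ∀ i, StrictMono (p i)
  apos : ∀ i k, 0 < a i k
  ppos : ∀ i k, 0 < p i k
  b : Fin m → ℕ
  q : Fin m → ℕ
  bmono : StrictMono b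
  qmono : StrictMono q
  bpos : ∀ j, 0 < b j
  qpos : ∀ j, 0 < q j
  hba : ∀ i k, a i k ≤ Finset.univ.sup b

namespace ArrearsInstance

variable (I : ArrearsInstance)

/-- `L = max(max_i a_{i,|S_i|}, b_m) + 1`. -/
def L : ℕ := ((Finset.univ.sup fun i => I.a i (Fin.last (I.sz i))) ⊔ Finset.univ.sup I.b) + 1

/-- `r = max(max_i p_{i,|S_i|}, q_m) + 1`. -/
def r : ℕ := ((Finset.univ.sup fun i => I.p i (Fin.last (I.sz i))) ⊔ Finset.univ.sup I.q) + 1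

/-- `q_{j-1}`, with `q_0 = 0`. -/
def qprev (j : Fin I.m) : ℕ :=
  if (j : ℕ) = 0 then 0 else I.q ⟨(j : ℕ) - 1, lt_of_le_of_lt (Nat.sub_le _ _) j.isLt⟩

/-- `b_{j-1}`, with `b_0 = 0`. -/
def bprev (j : Fin I.m) : ℕ :=
  if (j : ℕ) = 0 then 0 else I.b ⟨(j : ℕ) - 1, lt_of_le_of_lt (Nat.sub_le _ _) j.isLt⟩

/-- The number `q j − q (j−1)` of short legs of length `b (j−1) + 1`. -/
def qdiff (j : Fin I.m) : ℕ := I.q j - I.qprev j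

/-- The legs of the spider of the constructed instance `I′`: one long leg per payment
duty, `q j − q (j−1)` short legs of length `b (j−1) + 1` for every `j`, and `r` short
legs of length `L`. -/
def Leg : Type := Fin I.n ⊕ ((Σ j : Fin I.m, Fin (I.qdiff j)) ⊕ Fin I.r)

instance : DecidableEq I.Leg :=
  inferInstanceAs (DecidableEq (Fin I.n ⊕ ((Σ j : Fin I.m, Fin (I.qdiff j)) ⊕ Fin I.r)))

/-- The coordinate `4L − a_{i,|S_i|} + 1` of the farthest users on long leg `i`. -/
def endCoord (i : Fin I.n) : ℝ := 4 * I.L - I.a i (Fin.last (I.sz i)) + 1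

/-- The coordinate `2L − a_{i,|S_i|}` of the innermost users on long leg `i`. -/
def lastCoord (i : Fin I.n) : ℝ := 2 * I.L - I.a i (Fin.last (I.sz i))

/-- The farthest user on long leg `i`. -/
def endPt (i : Fin I.n) : I.Leg × ℝ := (Sum.inl i, I.endCoord i)

/-- The users on long leg `i`: `r` users at `4L − a_{i,|S_i|} + 1`, then
`p_{i,k+1} − p_{i,k}` users at `2L − a_{i,k}` for `k = 1, …, |S_i| − 1`, and
`r − p_{i,|S_i|}` users at `2L − a_{i,|S_i|}`. -/
def longUsers (i : Fin I.n) : Multiset (I.Leg × ℝ) :=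
  Multiset.replicate I.r (I.endPt i)
  + (Finset.univ : Finset (Fin (I.sz i))).val.bind (fun k =>
      Multiset.replicate (I.p i k.succ - I.p i k.castSucc)
        ((Sum.inl i, (2 * I.L - I.a i k.castSucc : ℝ)) : I.Leg × ℝ))
  + Multiset.replicate (I.r - I.p i (Fin.last (I.sz i)))
      ((Sum.inl i, I.lastCoord i) : I.Leg × ℝ)

/-- All users of the constructed instance `I′`: the users on the long legs, one user at
the tip of each short leg of length `b (j−1) + 1`, and one user at the tip of each of
the `r` short legs of length `L`. -/
def users : Multiset (I.Leg × ℝ) :=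
  (Finset.univ : Finset (Fin I.n)).val.bind I.longUsers
  + (Finset.univ : Finset (Σ j : Fin I.m, Fin (I.qdiff j))).val.map
      (fun s => ((Sum.inr (Sum.inl s), (I.bprev s.1 + 1 : ℝ)) : I.Leg × ℝ))
  + (Finset.univ : Finset (Fin I.r)).val.map
      (fun t => ((Sum.inr (Sum.inr t), (I.L : ℝ)) : I.Leg × ℝ))

/-- A feasible solution of `I′`: a partition of the users into clusters, each containing
at least `r` users and having diameter at most `2L`. -/
def Feasible (P : Multiset (Multiset (I.Leg × ℝ))) : Prop :=
  P.sum = I.users ∧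
  ∀ C ∈ P, I.r ≤ Multiset.card C ∧ ∀ x ∈ C, ∀ y ∈ C, spiderDist x y ≤ 2 * I.L

end ArrearsInstance


namespace ArrearsInstance

variable (I : ArrearsInstance)

/-- `a_{i,|S_i|}`. -/
def A (i : Fin I.n) : ℕ := I.a i (Fin.last (I.sz i))

/-- The middle point at coordinate `2L - a i k` on long leg `i`. -/
def midPt (i : Fin I.n) (k : Fin (I.sz i + 1)) : I.Leg × ℝ :=
  (Sum.inl i, (2 * I.L - I.a i k : ℝ))

/-- The user on short leg `s`. -/
def sBPt (s : Σ j : Fin I.m, Fin (I.qdiff j)) : I.Leg × ℝ :=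
  (Sum.inr (Sum.inl s), (I.bprev s.1 + 1 : ℝ))

/-- The user on a short leg of length `L`. -/
def sLPt (t : Fin I.r) : I.Leg × ℝ := (Sum.inr (Sum.inr t), (I.L : ℝ))

lemma one_le_L : 1 ≤ I.L := Nat.succ_le_succ (Nat.zero_le _)

lemma A_lt_L (i : Fin I.n) : I.A i < I.L := by
  have h : I.A i ≤ Finset.univ.sup fun i => I.a i (Fin.last (I.sz i)) :=
    Finset.le_sup (Finset.mem_univ i)
  have h2 := le_trans h (le_sup_left (b := Finset.univ.sup I.b))
  unfold L; omega

lemma a_le_A (i : Fin I.n) (k : Fin (I.sz i + 1)) : I.a i k ≤ I.A i :=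
  (I.amono i).monotone (Fin.le_last k)

lemma a_lt_L (i : Fin I.n) (k : Fin (I.sz i + 1)) : I.a i k < I.L :=
  lt_of_le_of_lt (I.a_le_A i k) (I.A_lt_L i)

lemma b_lt_L (j : Fin I.m) : I.b j < I.L := by
  have h : I.b j ≤ Finset.univ.sup I.b := Finset.le_sup (Finset.mem_univ j)
  have h2 := le_trans h (le_sup_right (a := Finset.univ.sup fun i => I.a i (Fin.last (I.sz i))))
  unfold L; omega

lemma bprev_lt_L (j : Fin I.m) : I.bprev j < I.L := by
  unfold bprev; split
  · exact I.one_le_L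
  · exact I.b_lt_L _

lemma bprev_mono : Monotone I.bprev := by
  intro j j' h
  have hle : (j : ℕ) ≤ (j' : ℕ) := h
  unfold bprev
  by_cases h0 : (j : ℕ) = 0
  · rw [if_pos h0]; exact Nat.zero_le _
  · have h0' : (j' : ℕ) ≠ 0 := by omega
    rw [if_neg h0, if_neg h0']
    exact I.bmono.monotone (by simp only [Fin.mk_le_mk]; omega)

lemma p_le_pA (i : Fin I.n) (k : Fin (I.sz i + 1)) : I.p i k ≤ I.p i (Fin.last (I.sz i)) :=
  (I.pmono i).monotone (Fin.le_last k)

lemma pA_lt_r (i : Fin I.n) : I.p i (Fin.last (I.sz i)) < I.r := by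
  have h : I.p i (Fin.last (I.sz i)) ≤ Finset.univ.sup fun i => I.p i (Fin.last (I.sz i)) :=
    Finset.le_sup (f := fun i => I.p i (Fin.last (I.sz i))) (Finset.mem_univ i)
  have h2 := le_trans h (le_sup_left (b := Finset.univ.sup I.q))
  unfold r; omega

lemma p_lt_r (i : Fin I.n) (k : Fin (I.sz i + 1)) : I.p i k < I.r :=
  lt_of_le_of_lt (I.p_le_pA i k) (I.pA_lt_r i)

lemma q_lt_r (j : Fin I.m) : I.q j < I.r := by
  have h : I.q j ≤ Finset.univ.sup I.q := Finset.le_sup (Finset.mem_univ j)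
  have h2 := le_trans h
    (le_sup_right (a := Finset.univ.sup fun i => I.p i (Fin.last (I.sz i))))
  unfold r; omega

lemma qprev_le_q (j : Fin I.m) : I.qprev j ≤ I.q j := by
  unfold qprev; split
  · exact Nat.zero_le _
  · exact I.qmono.monotone (Fin.le_def.mpr (Nat.sub_le _ _))

/-- The last budget index. -/
def jmax : Fin I.m := ⟨I.m - 1, by have := I.mpos; omega⟩

lemma b_le_bjmax (j : Fin I.m) : I.b j ≤ I.b I.jmax := by
  refine I.bmono.monotone ?_
  have := j.isLt
  simp only [jmax, Fin.le_def]; omega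

lemma sup_b_eq : Finset.univ.sup I.b = I.b I.jmax :=
  le_antisymm (Finset.sup_le fun j _ => I.b_le_bjmax j) (Finset.le_sup (Finset.mem_univ _))

lemma a_le_bjmax (i : Fin I.n) (k : Fin (I.sz i + 1)) : I.a i k ≤ I.b I.jmax :=
  (I.hba i k).trans (le_of_eq I.sup_b_eq)

/-- ℕ-extension of `p i`. -/
def pN (i : Fin I.n) : ℕ → ℕ := fun t => I.p i ⟨min t (I.sz i), by omega⟩

lemma pN_mono (i : Fin I.n) : Monotone (I.pN i) := fun s t h =>
  (I.pmono i).monotone (by simp only [Fin.mk_le_mk]; omega)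

lemma pN_eq (i : Fin I.n) (k : Fin (I.sz i + 1)) : I.pN i k = I.p i k := by
  unfold pN; congr 1
  have := k.isLt
  simp only [Fin.ext_iff]; omega

/-- ℕ-extension of `q`. -/
def qN : ℕ → ℕ := fun t => I.q ⟨min t (I.m - 1), by have := I.mpos; omega⟩

lemma qN_mono : Monotone I.qN := fun s t h =>
  I.qmono.monotone (by simp only [Fin.mk_le_mk]; omega)

lemma qN_eq (j : Fin I.m) : I.qN j = I.q j := by
  unfold qN; congr 1
  have := j.isLt
  simp only [Fin.ext_iff]; omega

lemma qprev_eq (j : Fin I.m) : I.qprev j = if (j : ℕ) = 0 then 0 else I.qN ((j : ℕ) - 1) := by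
  unfold qprev
  split
  · rfl
  · rw [I.qN_eq ⟨(j : ℕ) - 1, _⟩]

section casts

lemma cast_one_le_L : (1 : ℝ) ≤ (I.L : ℝ) := by exact_mod_cast I.one_le_L
lemma cast_A_lt_L (i : Fin I.n) : (I.A i : ℝ) < I.L := by exact_mod_cast I.A_lt_L i
lemma cast_a_lt_L (i : Fin I.n) (k : Fin (I.sz i + 1)) : (I.a i k : ℝ) < I.L := by
  exact_mod_cast I.a_lt_L i k
lemma cast_a_le_A (i : Fin I.n) (k : Fin (I.sz i + 1)) : (I.a i k : ℝ) ≤ I.A i := by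
  exact_mod_cast I.a_le_A i k
lemma cast_a_pos (i : Fin I.n) (k : Fin (I.sz i + 1)) : (0 : ℝ) < I.a i k := by
  exact_mod_cast I.apos i k
lemma cast_bprev_lt_L (j : Fin I.m) : (I.bprev j : ℝ) < I.L := by exact_mod_cast I.bprev_lt_L j
lemma cast_bprev_add_one_le_L (j : Fin I.m) : (I.bprev j : ℝ) + 1 ≤ I.L := by
  have h : I.bprev j + 1 ≤ I.L := I.bprev_lt_L j
  exact_mod_cast h

end casts

lemma endCoord_eq (i : Fin I.n) : I.endCoord i = 4 * I.L - I.A i + 1 := rfl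

lemma midPt_last (i : Fin I.n) :
    I.midPt i (Fin.last (I.sz i)) = (Sum.inl i, I.lastCoord i) := rfl

lemma endPt_ne_midPt (i i' : Fin I.n) (k : Fin (I.sz i' + 1)) : I.endPt i ≠ I.midPt i' k := by
  intro h
  have h2 := congrArg Prod.snd h
  simp only [endPt, midPt, endCoord_eq] at h2
  have h3 := I.cast_A_lt_L i
  have h4 := I.cast_a_pos i' k
  have h5 := I.cast_one_le_L
  linarith

lemma midPt_inj {i : Fin I.n} {k k' : Fin (I.sz i + 1)} (h : I.midPt i k = I.midPt i k') :
    k = k' := by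
  have h2 := congrArg Prod.snd h
  simp only [midPt] at h2
  have : (I.a i k : ℝ) = I.a i k' := by linarith
  exact (I.amono i).injective (by exact_mod_cast this)

lemma fst_mem_longUsers {i : Fin I.n} {u : I.Leg × ℝ} (h : u ∈ I.longUsers i) :
    u.1 = Sum.inl i := by
  unfold longUsers at h
  rcases Multiset.mem_add.1 h with h | h
  · rcases Multiset.mem_add.1 h with h | h
    · rw [Multiset.eq_of_mem_replicate h]; rfl
    · obtain ⟨k, _, hm⟩ := Multiset.mem_bind.1 h
      rw [Multiset.eq_of_mem_replicate hm]
  · rw [Multiset.eq_of_mem_replicate h]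

lemma mem_longUsers_cases {i : Fin I.n} {u : I.Leg × ℝ} (h : u ∈ I.longUsers i) :
    u = I.endPt i ∨ ∃ k, u = I.midPt i k := by
  unfold longUsers at h
  rcases Multiset.mem_add.1 h with h | h
  · rcases Multiset.mem_add.1 h with h | h
    · exact Or.inl (Multiset.eq_of_mem_replicate h)
    · obtain ⟨k, _, hm⟩ := Multiset.mem_bind.1 h
      exact Or.inr ⟨k.castSucc, Multiset.eq_of_mem_replicate hm⟩
  · exact Or.inr ⟨Fin.last _, Multiset.eq_of_mem_replicate h⟩

lemma mem_users_cases {u : I.Leg × ℝ} (h : u ∈ I.users) :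
    (∃ i, u = I.endPt i) ∨ (∃ i k, u = I.midPt i k) ∨ (∃ s, u = I.sBPt s) ∨
      (∃ t, u = I.sLPt t) := by
  unfold users at h
  rcases Multiset.mem_add.1 h with h | h
  · rcases Multiset.mem_add.1 h with h | h
    · obtain ⟨i, _, hm⟩ := Multiset.mem_bind.1 h
      rcases I.mem_longUsers_cases hm with h' | ⟨k, h'⟩
      · exact Or.inl ⟨i, h'⟩
      · exact Or.inr (Or.inl ⟨i, k, h'⟩)
    · obtain ⟨s, _, hm⟩ := Multiset.mem_map.1 h
      exact Or.inr (Or.inr (Or.inl ⟨s, hm.symm⟩))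
  · obtain ⟨t, _, hm⟩ := Multiset.mem_map.1 h
    exact Or.inr (Or.inr (Or.inr ⟨t, hm.symm⟩))

end ArrearsInstance


namespace ArrearsInstance

variable (I : ArrearsInstance)

lemma count_bind_longUsers (x : I.Leg × ℝ) (i : Fin I.n) (hx : x.1 = Sum.inl i) :
    ((Finset.univ : Finset (Fin I.n)).val.bind I.longUsers).count x
      = (I.longUsers i).count x := by
  rw [Multiset.count_bind]
  have h : (Multiset.map (fun i' => Multiset.count x (I.longUsers i')) Finset.univ.val).sum
      = ∑ i', (I.longUsers i').count x := rfl
  rw [h, Finset.sum_eq_single i]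
  · intro i' _ hne
    refine Multiset.count_eq_zero.2 fun hmem => hne ?_
    have h2 := I.fst_mem_longUsers hmem
    rw [hx] at h2
    exact (Sum.inl.inj h2).symm
  · intro h2; exact absurd (Finset.mem_univ i) h2

lemma count_users_eq_long (i : Fin I.n) (k : Fin (I.sz i + 1)) :
    I.users.count (I.midPt i k) = (I.longUsers i).count (I.midPt i k) := by
  unfold users
  rw [Multiset.count_add, Multiset.count_add, I.count_bind_longUsers _ i rfl]
  have hB : (Finset.univ.val.map
      (fun s : Σ j : Fin I.m, Fin (I.qdiff j) =>
        ((Sum.inr (Sum.inl s), (I.bprev s.1 + 1 : ℝ)) : I.Leg × ℝ))).count (I.midPt i k) = 0 := by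
    refine Multiset.count_eq_zero.2 fun hm => ?_
    obtain ⟨s, _, he⟩ := Multiset.mem_map.1 hm
    simp [midPt, Prod.ext_iff] at he
  have hL : (Finset.univ.val.map
      (fun t : Fin I.r => ((Sum.inr (Sum.inr t), (I.L : ℝ)) : I.Leg × ℝ))).count
        (I.midPt i k) = 0 := by
    refine Multiset.count_eq_zero.2 fun hm => ?_
    obtain ⟨t, _, he⟩ := Multiset.mem_map.1 hm
    simp [midPt, Prod.ext_iff] at he
  rw [hB, hL]
  omega

lemma count_longUsers_midPt_castSucc (i : Fin I.n) (k : Fin (I.sz i)) :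
    (I.longUsers i).count (I.midPt i k.castSucc) = I.p i k.succ - I.p i k.castSucc := by
  unfold longUsers
  rw [Multiset.count_add, Multiset.count_add, Multiset.count_replicate,
    Multiset.count_replicate, Multiset.count_bind]
  rw [if_neg (I.endPt_ne_midPt i i k.castSucc)]
  have hlast : ¬ ((Sum.inl i, I.lastCoord i) : I.Leg × ℝ) = I.midPt i k.castSucc := by
    intro h
    have h2 := I.midPt_inj ((I.midPt_last i).symm ▸ h : I.midPt i (Fin.last (I.sz i)) = _)
    exact absurd h2.symm (Fin.castSucc_lt_last k).ne
  rw [if_neg hlast]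
  have hsum : (Multiset.map (fun k' : Fin (I.sz i) =>
      Multiset.count (I.midPt i k.castSucc)
        (Multiset.replicate (I.p i k'.succ - I.p i k'.castSucc)
          ((Sum.inl i, (2 * I.L - I.a i k'.castSucc : ℝ)) : I.Leg × ℝ)))
      Finset.univ.val).sum
      = ∑ k' : Fin (I.sz i), if k' = k then I.p i k'.succ - I.p i k'.castSucc else 0 := by
    show ∑ k' : Fin (I.sz i), _ = _
    refine Finset.sum_congr rfl fun k' _ => ?_
    have hpt : ((Sum.inl i, (2 * I.L - I.a i k'.castSucc : ℝ)) : I.Leg × ℝ)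
        = I.midPt i k'.castSucc := rfl
    rw [hpt, Multiset.count_replicate]
    by_cases h : k' = k
    · subst h; rw [if_pos rfl, if_pos rfl]
    · rw [if_neg, if_neg h]
      intro he
      exact h (Fin.castSucc_inj.mp (I.midPt_inj he))
  rw [hsum, Finset.sum_ite_eq' Finset.univ k
      (fun k' => I.p i k'.succ - I.p i k'.castSucc), if_pos (Finset.mem_univ k)]
  simp

lemma count_longUsers_midPt_last (i : Fin I.n) :
    (I.longUsers i).count (I.midPt i (Fin.last (I.sz i))) = I.r - I.p i (Fin.last (I.sz i)) := by
  unfold longUsers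
  rw [Multiset.count_add, Multiset.count_add, Multiset.count_replicate,
    Multiset.count_replicate, Multiset.count_bind]
  rw [if_neg (I.endPt_ne_midPt i i (Fin.last (I.sz i)))]
  rw [if_pos (I.midPt_last i ▸ rfl : ((Sum.inl i, I.lastCoord i) : I.Leg × ℝ) = _)]
  have hsum : (Multiset.map (fun k' : Fin (I.sz i) =>
      Multiset.count (I.midPt i (Fin.last (I.sz i)))
        (Multiset.replicate (I.p i k'.succ - I.p i k'.castSucc)
          ((Sum.inl i, (2 * I.L - I.a i k'.castSucc : ℝ)) : I.Leg × ℝ)))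
      Finset.univ.val).sum = ∑ _k' : Fin (I.sz i), (0 : ℕ) := by
    show ∑ k' : Fin (I.sz i), _ = _
    refine Finset.sum_congr rfl fun k' _ => ?_
    have hpt : ((Sum.inl i, (2 * I.L - I.a i k'.castSucc : ℝ)) : I.Leg × ℝ)
        = I.midPt i k'.castSucc := rfl
    rw [hpt, Multiset.count_replicate, if_neg]
    intro he
    exact absurd (I.midPt_inj he) (Fin.castSucc_lt_last k').ne
  rw [hsum]
  simp

lemma count_users_midPt_castSucc (i : Fin I.n) (k : Fin (I.sz i)) :
    I.users.count (I.midPt i k.castSucc) = I.p i k.succ - I.p i k.castSucc := by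
  rw [I.count_users_eq_long, I.count_longUsers_midPt_castSucc]

lemma count_users_midPt_last (i : Fin I.n) :
    I.users.count (I.midPt i (Fin.last (I.sz i))) = I.r - I.p i (Fin.last (I.sz i)) := by
  rw [I.count_users_eq_long, I.count_longUsers_midPt_last]

lemma pN_eq' (i : Fin I.n) (t : ℕ) (h : t ≤ I.sz i) : I.pN i t = I.p i ⟨t, by omega⟩ := by
  unfold pN; congr 1
  simp only [Fin.mk.injEq]; omega

/-- Telescoping: the number of middle users of leg `i` with index at least `z` is
`r - p i z`. -/
lemma sum_count_mid_ge (i : Fin I.n) (z : Fin (I.sz i + 1)) :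
    ∑ k : Fin (I.sz i + 1), (if z ≤ k then I.users.count (I.midPt i k) else 0)
      = I.r - I.p i z := by
  rw [Fin.sum_univ_castSucc]
  rw [if_pos (Fin.le_last z), I.count_users_midPt_last]
  have h1 : ∀ k : Fin (I.sz i),
      (if z ≤ k.castSucc then I.users.count (I.midPt i k.castSucc) else 0)
        = (fun t : ℕ => if (z : ℕ) ≤ t then I.pN i (t + 1) - I.pN i t else 0) (k : ℕ) := by
    intro k
    have hk := k.isLt
    show _ = if (z : ℕ) ≤ (k : ℕ) then I.pN i ((k : ℕ) + 1) - I.pN i (k : ℕ) else 0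
    simp only [I.count_users_midPt_castSucc]
    by_cases h : (z : ℕ) ≤ (k : ℕ)
    · rw [if_pos (by exact h), if_pos h]
      rw [I.pN_eq' i (k + 1) (by omega), I.pN_eq' i k (by omega)]
      rfl
    · rw [if_neg (by exact h), if_neg h]
  have hstep : ∑ k : Fin (I.sz i),
      (if z ≤ k.castSucc then I.users.count (I.midPt i k.castSucc) else 0)
      = ∑ t ∈ Finset.range (I.sz i),
          (fun t : ℕ => if (z : ℕ) ≤ t then I.pN i (t + 1) - I.pN i t else 0) t := by
    rw [← Fin.sum_univ_eq_sum_range]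
    exact Finset.sum_congr rfl fun k _ => h1 k
  rw [hstep]
  have h2 : ∑ t ∈ Finset.range (I.sz i),
        (fun t : ℕ => if (z : ℕ) ≤ t then I.pN i (t + 1) - I.pN i t else 0) t
      = ∑ t ∈ Finset.Ico (z : ℕ) (I.sz i), (I.pN i (t + 1) - I.pN i t) := by
    simp only []
    rw [← Finset.sum_filter]
    congr 1
    ext t
    simp only [Finset.mem_filter, Finset.mem_range, Finset.mem_Ico]
    omega
  rw [h2, tele_Ico (I.pN i) (I.pN_mono i) (I.sz i) (z : ℕ) (by have := z.isLt; omega)]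
  have h3 : I.pN i (I.sz i) = I.p i (Fin.last (I.sz i)) := I.pN_eq' i (I.sz i) le_rfl
  have h4 : I.pN i (z : ℕ) = I.p i z := by
    rw [I.pN_eq' i (z : ℕ) (by have := z.isLt; omega)]
  rw [h3, h4]
  have h5 := I.p_le_pA i z
  have h6 := I.pA_lt_r i
  omega

/-- Telescoping: the number of short legs with index at most `ĵ` is `q ĵ`. -/
lemma sum_qdiff_prefix (jh : Fin I.m) :
    ∑ j : Fin I.m, (if j ≤ jh then I.qdiff j else 0) = I.q jh := by
  have h1 : ∀ j : Fin I.m, (if j ≤ jh then I.qdiff j else 0)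
      = (fun t : ℕ => if t ≤ (jh : ℕ) then
          I.qN t - (if t = 0 then 0 else I.qN (t - 1)) else 0) (j : ℕ) := by
    intro j
    show _ = if (j : ℕ) ≤ (jh : ℕ) then
        I.qN (j : ℕ) - (if (j : ℕ) = 0 then 0 else I.qN ((j : ℕ) - 1)) else 0
    by_cases h : (j : ℕ) ≤ (jh : ℕ)
    · rw [if_pos (by exact h), if_pos h]
      unfold qdiff
      rw [I.qprev_eq, I.qN_eq]
    · rw [if_neg (by exact h), if_neg h]
  have hstep : ∑ j : Fin I.m, (if j ≤ jh then I.qdiff j else 0)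
      = ∑ t ∈ Finset.range I.m, (fun t : ℕ => if t ≤ (jh : ℕ) then
          I.qN t - (if t = 0 then 0 else I.qN (t - 1)) else 0) t := by
    rw [← Fin.sum_univ_eq_sum_range]
    exact Finset.sum_congr rfl fun j _ => h1 j
  rw [hstep]
  have h2 : ∑ t ∈ Finset.range I.m, (fun t : ℕ => if t ≤ (jh : ℕ) then
        I.qN t - (if t = 0 then 0 else I.qN (t - 1)) else 0) t
      = ∑ t ∈ Finset.range ((jh : ℕ) + 1), (I.qN t - (if t = 0 then 0 else I.qN (t - 1))) := by
    simp only []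
    rw [← Finset.sum_filter]
    congr 1
    ext t
    simp only [Finset.mem_filter, Finset.mem_range]
    have := jh.isLt
    omega
  rw [h2, tele_prefix I.qN I.qN_mono (jh : ℕ), I.qN_eq]

end ArrearsInstance


theorem sum_univ_eq_bind {n : ℕ} {α : Type*} (f : Fin n → Multiset α) :
    ∑ i, f i = (Finset.univ : Finset (Fin n)).val.bind f := by
  rw [Multiset.bind]; rfl

theorem map_sigma_univ {n : ℕ} {N : Fin n → ℕ} {α : Type*} (g : (Σ i : Fin n, Fin (N i)) → α) :
    Multiset.map g (Finset.univ : Finset (Σ i : Fin n, Fin (N i))).val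
      = (Finset.univ : Finset (Fin n)).val.bind
          (fun i => Multiset.map (fun t => g ⟨i, t⟩) Finset.univ.val) := by
  rw [← Finset.univ_sigma_univ]
  show Multiset.map g (Finset.univ.val.sigma fun _ => Finset.univ.val) = _
  simp only [Multiset.sigma, Multiset.map_bind, Multiset.map_map]
  rfl

theorem msum_le_msum (s t : Multiset ℕ) (h : s ≤ t) : s.sum ≤ t.sum := by
  obtain ⟨u, rfl⟩ := Multiset.le_iff_exists_add.1 h
  simp

namespace ArrearsInstance

variable (I : ArrearsInstance)

lemma sum_pdiff_ge (i : Fin I.n) (zi : Fin (I.sz i + 1)) :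
    ∑ k : Fin (I.sz i), (if zi ≤ k.castSucc then I.p i k.succ - I.p i k.castSucc else 0)
      = I.p i (Fin.last (I.sz i)) - I.p i zi := by
  have h1 : ∀ k : Fin (I.sz i),
      (if zi ≤ k.castSucc then I.p i k.succ - I.p i k.castSucc else 0)
        = (fun t : ℕ => if (zi : ℕ) ≤ t then I.pN i (t + 1) - I.pN i t else 0) (k : ℕ) := by
    intro k
    have hk := k.isLt
    show _ = if (zi : ℕ) ≤ (k : ℕ) then I.pN i ((k : ℕ) + 1) - I.pN i (k : ℕ) else 0
    by_cases h : (zi : ℕ) ≤ (k : ℕ)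
    · rw [if_pos (by exact h), if_pos h]
      rw [I.pN_eq' i (k + 1) (by omega), I.pN_eq' i k (by omega)]
      rfl
    · rw [if_neg (by exact h), if_neg h]
  have hstep : ∑ k : Fin (I.sz i),
      (if zi ≤ k.castSucc then I.p i k.succ - I.p i k.castSucc else 0)
      = ∑ t ∈ Finset.range (I.sz i),
          (fun t : ℕ => if (zi : ℕ) ≤ t then I.pN i (t + 1) - I.pN i t else 0) t := by
    rw [← Fin.sum_univ_eq_sum_range]
    exact Finset.sum_congr rfl fun k _ => h1 k
  rw [hstep]
  have h2 : ∑ t ∈ Finset.range (I.sz i),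
        (fun t : ℕ => if (zi : ℕ) ≤ t then I.pN i (t + 1) - I.pN i t else 0) t
      = ∑ t ∈ Finset.Ico (zi : ℕ) (I.sz i), (I.pN i (t + 1) - I.pN i t) := by
    simp only []
    rw [← Finset.sum_filter]
    congr 1
    ext t
    simp only [Finset.mem_filter, Finset.mem_range, Finset.mem_Ico]
    omega
  rw [h2, tele_Ico (I.pN i) (I.pN_mono i) (I.sz i) (zi : ℕ) (by have := zi.isLt; omega)]
  rw [I.pN_eq' i (I.sz i) le_rfl, I.pN_eq' i (zi : ℕ) (by have := zi.isLt; omega)]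
  congr 1

/-- The key arithmetic inequality extracted from the yes-certificate. -/
lemma key_ineq (z : ∀ i : Fin I.n, Fin (I.sz i + 1))
    (hq : ∀ j : Fin I.m,
      (∑ i : Fin I.n, if I.a i (z i) ≤ I.b j then I.p i (z i) else 0) ≤ I.q j)
    (v : ℕ) (hv1 : 1 ≤ v) :
    (∑ i : Fin I.n, if I.a i (z i) ≤ v then I.p i (z i) else 0)
      ≤ ∑ j : Fin I.m, if I.bprev j + 1 ≤ v then I.qdiff j else 0 := by
  classical
  set Jv : Finset (Fin I.m) := Finset.univ.filter (fun j => I.bprev j + 1 ≤ v) with hJv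
  have hmem0 : (⟨0, I.mpos⟩ : Fin I.m) ∈ Jv := by
    refine Finset.mem_filter.2 ⟨Finset.mem_univ _, ?_⟩
    have : I.bprev ⟨0, I.mpos⟩ = 0 := if_pos rfl
    omega
  have hne : Jv.Nonempty := ⟨_, hmem0⟩
  set jh := Jv.max' hne with hjh
  have hjhJ : jh ∈ Jv := Jv.max'_mem hne
  have hjhv : I.bprev jh + 1 ≤ v := (Finset.mem_filter.1 hjhJ).2
  have hiff : ∀ j : Fin I.m, (I.bprev j + 1 ≤ v) ↔ j ≤ jh := by
    intro j
    constructor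
    · intro h
      exact Jv.le_max' j (Finset.mem_filter.2 ⟨Finset.mem_univ _, h⟩)
    · intro h
      have := I.bprev_mono h
      omega
  have hrhs : ∑ j : Fin I.m, (if I.bprev j + 1 ≤ v then I.qdiff j else 0)
      = ∑ j : Fin I.m, (if j ≤ jh then I.qdiff j else 0) := by
    refine Finset.sum_congr rfl fun j _ => ?_
    by_cases h : I.bprev j + 1 ≤ v
    · rw [if_pos h, if_pos ((hiff j).1 h)]
    · rw [if_neg h, if_neg (fun hc => h ((hiff j).2 hc))]
  rw [hrhs, I.sum_qdiff_prefix jh]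
  by_cases hlt : (jh : ℕ) + 1 < I.m
  · set j1 : Fin I.m := ⟨(jh : ℕ) + 1, hlt⟩ with hj1
    have hj1n : ¬ (I.bprev j1 + 1 ≤ v) := by
      intro hc
      have := (hiff j1).1 hc
      rw [Fin.le_def] at this
      simp [hj1] at this
    have hbj1 : I.bprev j1 = I.b jh := by
      show (if ((j1 : Fin I.m) : ℕ) = 0 then 0 else I.b ⟨(j1 : ℕ) - 1, _⟩) = I.b jh
      rw [if_neg (by simp [hj1])]
      congr 1
    have hvb : v ≤ I.b jh := by omega
    calc (∑ i : Fin I.n, if I.a i (z i) ≤ v then I.p i (z i) else 0)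
        ≤ ∑ i : Fin I.n, (if I.a i (z i) ≤ I.b jh then I.p i (z i) else 0) := by
          refine Finset.sum_le_sum fun i _ => ?_
          by_cases h : I.a i (z i) ≤ v
          · rw [if_pos h, if_pos (le_trans h hvb)]
          · rw [if_neg h]
            exact Nat.zero_le _
      _ ≤ I.q jh := hq jh
  · have hjm : jh = I.jmax := by
      have := jh.isLt
      apply Fin.ext
      show (jh : ℕ) = I.m - 1
      omega
    calc (∑ i : Fin I.n, if I.a i (z i) ≤ v then I.p i (z i) else 0)
        ≤ ∑ i : Fin I.n, (if I.a i (z i) ≤ I.b jh then I.p i (z i) else 0) := by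
          refine Finset.sum_le_sum fun i _ => ?_
          rw [hjm, if_pos (I.a_le_bjmax i (z i))]
          by_cases h : I.a i (z i) ≤ v
          · rw [if_pos h]
          · rw [if_neg h]
            exact Nat.zero_le _
      _ ≤ I.q jh := hq jh

/-- Hall's theorem gives an injective assignment of short legs to the chosen payments. -/
lemma exists_matching (z : ∀ i : Fin I.n, Fin (I.sz i + 1))
    (hq : ∀ j : Fin I.m,
      (∑ i : Fin I.n, if I.a i (z i) ≤ I.b j then I.p i (z i) else 0) ≤ I.q j) :
    ∃ f : (Σ i : Fin I.n, Fin (I.p i (z i))) → (Σ j : Fin I.m, Fin (I.qdiff j)),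
      Function.Injective f ∧ ∀ x, I.bprev (f x).1 + 1 ≤ I.a x.1 (z x.1) := by
  classical
  set t : (Σ i : Fin I.n, Fin (I.p i (z i))) → Finset (Σ j : Fin I.m, Fin (I.qdiff j)) :=
    fun x => Finset.univ.filter (fun s => I.bprev s.1 + 1 ≤ I.a x.1 (z x.1)) with ht
  have hall : ∀ A : Finset (Σ i : Fin I.n, Fin (I.p i (z i))), A.card ≤ (A.biUnion t).card := by
    intro A
    rcases A.eq_empty_or_nonempty with rfl | hA
    · simp
    obtain ⟨x0, hx0, hmax⟩ := Finset.exists_max_image A (fun x => I.a x.1 (z x.1)) hA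
    set v := I.a x0.1 (z x0.1) with hv
    have h1 : A.card ≤ ∑ i : Fin I.n, if I.a i (z i) ≤ v then I.p i (z i) else 0 := by
      rw [← card_sigma_filter_fst (N := fun i => I.p i (z i)) (fun i => I.a i (z i) ≤ v)]
      refine Finset.card_le_card fun x hx => ?_
      exact Finset.mem_filter.2 ⟨Finset.mem_univ _, hmax x hx⟩
    have h2 : (t x0).card = ∑ j : Fin I.m, if I.bprev j + 1 ≤ v then I.qdiff j else 0 := by
      rw [ht]
      exact card_sigma_filter_fst (N := I.qdiff) (fun j => I.bprev j + 1 ≤ v)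
    have h3 : (t x0).card ≤ (A.biUnion t).card :=
      Finset.card_le_card (Finset.subset_biUnion_of_mem t hx0)
    have h4 := I.key_ineq z hq v (I.apos x0.1 (z x0.1))
    omega
  obtain ⟨f, hinj, hf⟩ := (Finset.all_card_le_biUnion_card_iff_existsInjective' t).1 hall
  exact ⟨f, hinj, fun x => (Finset.mem_filter.1 (hf x)).2⟩

section Construction

variable (z : ∀ i : Fin I.n, Fin (I.sz i + 1))

/-- The end cluster of long leg `i`. -/
def Cc (i : Fin I.n) : Multiset (I.Leg × ℝ) :=
  Multiset.replicate I.r (I.endPt i) +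
    (Finset.univ.val.filter (fun k : Fin (I.sz i) => ¬ z i ≤ k.castSucc)).bind
      (fun k => Multiset.replicate (I.p i k.succ - I.p i k.castSucc)
        ((Sum.inl i, (2 * I.L - I.a i k.castSucc : ℝ)) : I.Leg × ℝ))

/-- The middle users of long leg `i` that do not go into the end cluster. -/
def Dmid (i : Fin I.n) : Multiset (I.Leg × ℝ) :=
  (Finset.univ.val.filter (fun k : Fin (I.sz i) => z i ≤ k.castSucc)).bind
    (fun k => Multiset.replicate (I.p i k.succ - I.p i k.castSucc)
      ((Sum.inl i, (2 * I.L - I.a i k.castSucc : ℝ)) : I.Leg × ℝ)) +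
  Multiset.replicate (I.r - I.p i (Fin.last (I.sz i)))
    ((Sum.inl i, I.lastCoord i) : I.Leg × ℝ)

variable (f : (Σ i : Fin I.n, Fin (I.p i (z i))) → Σ j : Fin I.m, Fin (I.qdiff j))

/-- The short users assigned to long leg `i`. -/
def Dsh (i : Fin I.n) : Multiset (I.Leg × ℝ) :=
  Finset.univ.val.map (fun t : Fin (I.p i (z i)) => I.sBPt (f ⟨i, t⟩))

/-- All users on the short legs with one user at distance `b (j-1) + 1`. -/
def mapB : Multiset (I.Leg × ℝ) := Finset.univ.val.map I.sBPt

/-- All users on the short legs of length `L`. -/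
def mapL : Multiset (I.Leg × ℝ) := Finset.univ.val.map I.sLPt

/-- The multiset of short users used by the assignment `f`. -/
def usedSh : Multiset (I.Leg × ℝ) :=
  Finset.univ.val.map (fun x : Σ i : Fin I.n, Fin (I.p i (z i)) => I.sBPt (f x))

lemma users_eq' : I.users = (Finset.univ.val.bind I.longUsers) + I.mapB + I.mapL := rfl

lemma Cc_add_Dmid (i : Fin I.n) : I.Cc z i + I.Dmid z i = I.longUsers i := by
  unfold Cc Dmid longUsers
  have h := Multiset.filter_add_not (fun k : Fin (I.sz i) => z i ≤ k.castSucc) Finset.univ.val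
  conv_rhs => rw [← h]
  rw [Multiset.add_bind]
  abel

lemma sum_Dsh : ∑ i, I.Dsh z f i = I.usedSh z f := by
  rw [sum_univ_eq_bind, usedSh, map_sigma_univ]
  rfl

lemma sBPt_inj : Function.Injective I.sBPt := by
  intro s s' h
  have h2 := congrArg Prod.fst h
  exact Sum.inl.inj (Sum.inr.inj h2)

lemma usedSh_le_mapB (hf : Function.Injective f) : I.usedSh z f ≤ I.mapB := by
  refine (Multiset.le_iff_subset ?_).2 ?_
  · exact Multiset.Nodup.map (fun x y h => hf (I.sBPt_inj h)) Finset.univ.nodup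
  · intro x hx
    obtain ⟨x', _, rfl⟩ := Multiset.mem_map.1 hx
    exact Multiset.mem_map.2 ⟨f x', by simp, rfl⟩

lemma card_Cc (i : Fin I.n) : I.r ≤ Multiset.card (I.Cc z i) := by
  unfold Cc
  rw [Multiset.card_add, Multiset.card_replicate]
  exact Nat.le_add_right _ _

lemma card_D (i : Fin I.n) : I.r ≤ Multiset.card (I.Dmid z i + I.Dsh z f i) := by
  rw [Multiset.card_add]
  unfold Dmid Dsh
  rw [Multiset.card_add, Multiset.card_bind, Multiset.card_replicate, Multiset.card_map]
  simp only [Function.comp]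
  have hc : Multiset.card (Finset.univ.val : Multiset (Fin (I.p i (z i)))) = I.p i (z i) :=
    Finset.card_fin _
  have hb : (Multiset.map (fun k : Fin (I.sz i) => Multiset.card
      (Multiset.replicate (I.p i k.succ - I.p i k.castSucc)
        ((Sum.inl i, (2 * I.L - I.a i k.castSucc : ℝ)) : I.Leg × ℝ)))
      (Finset.univ.val.filter (fun k : Fin (I.sz i) => z i ≤ k.castSucc))).sum
      = I.p i (Fin.last (I.sz i)) - I.p i (z i) := by
    have e : Finset.univ.val.filter (fun k : Fin (I.sz i) => z i ≤ k.castSucc)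
        = (Finset.univ.filter (fun k : Fin (I.sz i) => z i ≤ k.castSucc)).val := rfl
    rw [e]
    have e2 : (Multiset.map (fun k : Fin (I.sz i) => Multiset.card
        (Multiset.replicate (I.p i k.succ - I.p i k.castSucc)
          ((Sum.inl i, (2 * I.L - I.a i k.castSucc : ℝ)) : I.Leg × ℝ)))
        (Finset.univ.filter (fun k : Fin (I.sz i) => z i ≤ k.castSucc)).val).sum
        = ∑ k ∈ Finset.univ.filter (fun k : Fin (I.sz i) => z i ≤ k.castSucc),
            Multiset.card (Multiset.replicate (I.p i k.succ - I.p i k.castSucc)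
              ((Sum.inl i, (2 * I.L - I.a i k.castSucc : ℝ)) : I.Leg × ℝ)) := rfl
    rw [e2]
    simp only [Multiset.card_replicate]
    rw [Finset.sum_filter]
    exact I.sum_pdiff_ge i (z i)
  rw [hb, hc]
  have h5 := I.p_le_pA i (z i)
  have h6 := I.pA_lt_r i
  omega

lemma card_F : I.r ≤ Multiset.card ((I.mapB - I.usedSh z f) + I.mapL) := by
  rw [Multiset.card_add]
  have h : Multiset.card I.mapL = I.r := by
    rw [mapL, Multiset.card_map]
    exact Finset.card_fin _
  omega

lemma mem_Cc {i : Fin I.n} {u : I.Leg × ℝ} (h : u ∈ I.Cc z i) :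
    u.1 = Sum.inl i ∧ (2 * I.L - I.A i + 1 : ℝ) ≤ u.2 ∧ u.2 ≤ 4 * I.L - I.A i + 1 := by
  have hL1 := I.cast_one_le_L
  have hAL := I.cast_A_lt_L i
  unfold Cc at h
  rcases Multiset.mem_add.1 h with h | h
  · rw [Multiset.eq_of_mem_replicate h]
    refine ⟨rfl, ?_, ?_⟩
    · show (2 * I.L - I.A i + 1 : ℝ) ≤ I.endCoord i
      rw [I.endCoord_eq]
      linarith
    · show (I.endCoord i : ℝ) ≤ 4 * I.L - I.A i + 1
      rw [I.endCoord_eq]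
  · obtain ⟨k, hk, hm⟩ := Multiset.mem_bind.1 h
    rw [Multiset.eq_of_mem_replicate hm]
    have hlt : I.a i k.castSucc + 1 ≤ I.A i := I.amono i (Fin.castSucc_lt_last k)
    have hlt' : (I.a i k.castSucc : ℝ) + 1 ≤ I.A i := by exact_mod_cast hlt
    have hpos := I.cast_a_pos i k.castSucc
    refine ⟨rfl, ?_, ?_⟩
    · show (2 * I.L - I.A i + 1 : ℝ) ≤ 2 * I.L - I.a i k.castSucc
      linarith
    · show (2 * I.L - I.a i k.castSucc : ℝ) ≤ 4 * I.L - I.A i + 1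
      linarith

lemma diam_Cc {i : Fin I.n} {x y : I.Leg × ℝ} (hx : x ∈ I.Cc z i) (hy : y ∈ I.Cc z i) :
    spiderDist x y ≤ 2 * I.L := by
  obtain ⟨hx1, hx2, hx3⟩ := I.mem_Cc z hx
  obtain ⟨hy1, hy2, hy3⟩ := I.mem_Cc z hy
  rw [spiderDist, if_pos (hx1.trans hy1.symm)]
  rw [abs_le]
  constructor <;> linarith

end Construction

end ArrearsInstance


namespace ArrearsInstance

variable (I : ArrearsInstance)

section Construction2

variable (z : ∀ i : Fin I.n, Fin (I.sz i + 1))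
variable (f : (Σ i : Fin I.n, Fin (I.p i (z i))) → Σ j : Fin I.m, Fin (I.qdiff j))

lemma mem_D {i : Fin I.n} {u : I.Leg × ℝ} (h : u ∈ I.Dmid z i + I.Dsh z f i) :
    (∃ k, z i ≤ k ∧ u = I.midPt i k) ∨
      (∃ x : Σ i' : Fin I.n, Fin (I.p i' (z i')), x.1 = i ∧ u = I.sBPt (f x)) := by
  rcases Multiset.mem_add.1 h with h | h
  · unfold Dmid at h
    rcases Multiset.mem_add.1 h with h | h
    · obtain ⟨k, hk, hm⟩ := Multiset.mem_bind.1 h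
      have hk2 := (Multiset.mem_filter.1 hk).2
      exact Or.inl ⟨k.castSucc, hk2, Multiset.eq_of_mem_replicate hm⟩
    · exact Or.inl ⟨Fin.last _, Fin.le_last _, Multiset.eq_of_mem_replicate h⟩
  · unfold Dsh at h
    obtain ⟨t, _, hm⟩ := Multiset.mem_map.1 h
    exact Or.inr ⟨⟨i, t⟩, rfl, hm.symm⟩

lemma diam_D (hprop : ∀ x, I.bprev (f x).1 + 1 ≤ I.a x.1 (z x.1)) {i : Fin I.n}
    {x y : I.Leg × ℝ} (hx : x ∈ I.Dmid z i + I.Dsh z f i) (hy : y ∈ I.Dmid z i + I.Dsh z f i) :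
    spiderDist x y ≤ 2 * I.L := by
  have hL1 := I.cast_one_le_L
  rcases I.mem_D z f hx with ⟨k, hzk, rfl⟩ | ⟨xx, hxx1, rfl⟩ <;>
    rcases I.mem_D z f hy with ⟨k', hzk', rfl⟩ | ⟨yy, hyy1, rfl⟩
  · simp only [midPt]
    erw [spiderDist_same, abs_le]
    have h1 := I.cast_a_lt_L i k
    have h2 := I.cast_a_lt_L i k'
    have h3 := I.cast_a_pos i k
    have h4 := I.cast_a_pos i k'
    constructor <;> linarith
  · simp only [midPt, sBPt]
    erw [spiderDist_ne Sum.inl_ne_inr]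
    have h1 : I.bprev (f yy).1 + 1 ≤ I.a i k := by
      have h2 := hprop yy
      rw [hyy1] at h2
      exact le_trans h2 ((I.amono i).monotone hzk)
    have h1' : (I.bprev (f yy).1 : ℝ) + 1 ≤ I.a i k := by exact_mod_cast h1
    linarith
  · simp only [midPt, sBPt]
    erw [spiderDist_ne Sum.inr_ne_inl]
    have h1 : I.bprev (f xx).1 + 1 ≤ I.a i k' := by
      have h2 := hprop xx
      rw [hxx1] at h2
      exact le_trans h2 ((I.amono i).monotone hzk')
    have h1' : (I.bprev (f xx).1 : ℝ) + 1 ≤ I.a i k' := by exact_mod_cast h1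
    linarith
  · by_cases heq : f xx = f yy
    · rw [heq, spiderDist, if_pos rfl, sub_self, abs_zero]
      positivity
    · simp only [sBPt]
      erw [spiderDist_ne (fun hc => heq (Sum.inl.inj (Sum.inr.inj hc)))]
      have h1 := I.cast_bprev_add_one_le_L (f xx).1
      have h2 := I.cast_bprev_add_one_le_L (f yy).1
      linarith

lemma mem_F {u : I.Leg × ℝ} (h : u ∈ (I.mapB - I.usedSh z f) + I.mapL) :
    (∃ s, u = I.sBPt s) ∨ (∃ t, u = I.sLPt t) := by
  rcases Multiset.mem_add.1 h with h | h
  · have h2 := Multiset.mem_of_le (tsub_le_self (a := I.mapB) (b := I.usedSh z f)) h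
    obtain ⟨s, _, hm⟩ := Multiset.mem_map.1 h2
    exact Or.inl ⟨s, hm.symm⟩
  · obtain ⟨t, _, hm⟩ := Multiset.mem_map.1 h
    exact Or.inr ⟨t, hm.symm⟩

lemma diam_F {x y : I.Leg × ℝ} (hx : x ∈ (I.mapB - I.usedSh z f) + I.mapL)
    (hy : y ∈ (I.mapB - I.usedSh z f) + I.mapL) :
    spiderDist x y ≤ 2 * I.L := by
  have hL1 := I.cast_one_le_L
  rcases I.mem_F z f hx with ⟨s, rfl⟩ | ⟨t, rfl⟩ <;> rcases I.mem_F z f hy with ⟨s', rfl⟩ | ⟨t', rfl⟩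
  · by_cases heq : s = s'
    · rw [heq, spiderDist, if_pos rfl, sub_self, abs_zero]
      positivity
    · simp only [sBPt]
      erw [spiderDist_ne (fun hc => heq (Sum.inl.inj (Sum.inr.inj hc)))]
      have h1 := I.cast_bprev_add_one_le_L s.1
      have h2 := I.cast_bprev_add_one_le_L s'.1
      linarith
  · simp only [sBPt, sLPt]
    erw [spiderDist_ne (fun hc => Sum.inl_ne_inr (Sum.inr.inj hc))]
    have h1 := I.cast_bprev_add_one_le_L s.1
    linarith
  · simp only [sBPt, sLPt]
    erw [spiderDist_ne (fun hc => Sum.inr_ne_inl (Sum.inr.inj hc))]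
    have h1 := I.cast_bprev_add_one_le_L s'.1
    linarith
  · by_cases heq : t = t'
    · rw [heq, spiderDist, if_pos rfl, sub_self, abs_zero]
      positivity
    · simp only [sLPt]
      erw [spiderDist_ne (fun hc => heq (Sum.inr.inj (Sum.inr.inj hc)))]
      linarith

end Construction2

/-- The backward direction: a yes-certificate yields a feasible solution. -/
lemma feasible_of_yes (z : ∀ i : Fin I.n, Fin (I.sz i + 1))
    (hq : ∀ j : Fin I.m,
      (∑ i : Fin I.n, if I.a i (z i) ≤ I.b j then I.p i (z i) else 0) ≤ I.q j) :
    ∃ P : Multiset (Multiset (I.Leg × ℝ)), I.Feasible P := by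
  obtain ⟨f, hinj, hprop⟩ := I.exists_matching z hq
  refine ⟨Finset.univ.val.map (I.Cc z)
      + Finset.univ.val.map (fun i => I.Dmid z i + I.Dsh z f i)
      + {(I.mapB - I.usedSh z f) + I.mapL}, ?_, ?_⟩
  · rw [Multiset.sum_add, Multiset.sum_add, Multiset.sum_singleton]
    have e1 : (Finset.univ.val.map (I.Cc z)).sum = ∑ i, I.Cc z i := rfl
    have e2 : (Finset.univ.val.map (fun i => I.Dmid z i + I.Dsh z f i)).sum
        = ∑ i, (I.Dmid z i + I.Dsh z f i) := rfl
    rw [e1, e2, Finset.sum_add_distrib, I.sum_Dsh z f]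
    have e3 : (∑ i, I.Cc z i) + (∑ i, I.Dmid z i) = ∑ i, I.longUsers i := by
      rw [← Finset.sum_add_distrib]
      exact Finset.sum_congr rfl fun i _ => I.Cc_add_Dmid z i
    have e5 : I.usedSh z f + (I.mapB - I.usedSh z f) = I.mapB :=
      add_tsub_cancel_of_le (I.usedSh_le_mapB z f hinj)
    set R := I.mapB - I.usedSh z f with hR
    conv_rhs => rw [I.users_eq', ← sum_univ_eq_bind I.longUsers, ← e3, ← e5]
    abel
  · intro C hC
    rcases Multiset.mem_add.1 hC with h | h
    · rcases Multiset.mem_add.1 h with h | h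
      · obtain ⟨i, _, rfl⟩ := Multiset.mem_map.1 h
        exact ⟨I.card_Cc z i, fun x hx y hy => I.diam_Cc z hx hy⟩
      · obtain ⟨i, _, rfl⟩ := Multiset.mem_map.1 h
        exact ⟨I.card_D z f i, fun x hx y hy => I.diam_D z f hprop hx hy⟩
    · rw [Multiset.mem_singleton.1 h]
      exact ⟨I.card_F z f, fun x hx y hy => I.diam_F z f hx hy⟩

end ArrearsInstance


theorem mem_msum {α : Type*} {S : Multiset (Multiset α)} {a : α} :
    a ∈ S.sum ↔ ∃ s ∈ S, a ∈ s := by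
  induction S using Multiset.induction with
  | empty => simp
  | cons b S ih => simp [Multiset.sum_cons, Multiset.mem_add, ih]

namespace ArrearsInstance

variable (I : ArrearsInstance)

/-- `u` is a short user whose leg index is at most `j`. -/
def QsP (j : Fin I.m) (u : I.Leg × ℝ) : Prop :=
  ∃ s : Σ j' : Fin I.m, Fin (I.qdiff j'), s.1 ≤ j ∧ u = I.sBPt s

/-- `u` is a middle user of long leg `i`. -/
def QmP (i : Fin I.n) (u : I.Leg × ℝ) : Prop := ∃ k, u = I.midPt i k

noncomputable instance decQsP (j : Fin I.m) : DecidablePred (I.QsP j) := fun _ =>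
  Classical.dec _

noncomputable instance decQmP (i : Fin I.n) : DecidablePred (I.QmP i) := fun _ =>
  Classical.dec _

lemma not_Qm_and_Qs {i : Fin I.n} {j : Fin I.m} {u : I.Leg × ℝ}
    (hm : I.QmP i u) (hs : I.QsP j u) : False := by
  obtain ⟨k, rfl⟩ := hm
  obtain ⟨s, _, heq⟩ := hs
  simp [midPt, sBPt, Prod.ext_iff] at heq

lemma countP_users_Qs (j : Fin I.m) : I.users.countP (I.QsP j) = I.q j := by
  rw [I.users_eq', Multiset.countP_add, Multiset.countP_add]
  have h1 : (Finset.univ.val.bind I.longUsers).countP (I.QsP j) = 0 := by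
    refine Multiset.countP_eq_zero.2 fun u hu hQ => ?_
    obtain ⟨i, _, hm⟩ := Multiset.mem_bind.1 hu
    obtain ⟨s, _, rfl⟩ := hQ
    have h2 := I.fst_mem_longUsers hm
    exact Sum.inr_ne_inl h2
  have h3 : I.mapL.countP (I.QsP j) = 0 := by
    refine Multiset.countP_eq_zero.2 fun u hu hQ => ?_
    obtain ⟨t, _, rfl⟩ := Multiset.mem_map.1 hu
    obtain ⟨s, _, heq⟩ := hQ
    simp only [sLPt, sBPt, Prod.ext_iff] at heq
    exact Sum.inr_ne_inl (Sum.inr.inj heq.1)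
  have h2 : I.mapB.countP (I.QsP j) = I.q j := by
    rw [mapB, Multiset.countP_map]
    have e : Multiset.filter (fun s => I.QsP j (I.sBPt s)) Finset.univ.val
        = Multiset.filter (fun s : Σ j' : Fin I.m, Fin (I.qdiff j') => s.1 ≤ j)
            Finset.univ.val := by
      refine Multiset.filter_congr fun s _ => ?_
      constructor
      · rintro ⟨s', hle, heq⟩
        rwa [I.sBPt_inj heq]
      · intro h
        exact ⟨s, h, rfl⟩
    rw [e]
    have e2 : Multiset.card (Multiset.filter
        (fun s : Σ j' : Fin I.m, Fin (I.qdiff j') => s.1 ≤ j) Finset.univ.val)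
        = (Finset.univ.filter (fun s : Σ j' : Fin I.m, Fin (I.qdiff j') => s.1 ≤ j)).card := rfl
    rw [e2, card_sigma_filter_fst (N := I.qdiff) (fun j' => j' ≤ j), I.sum_qdiff_prefix j]
  rw [h1, h2, h3]
  omega

lemma leg_unique {P : Multiset (Multiset (I.Leg × ℝ))} (hP : I.Feasible P)
    {C : Multiset (I.Leg × ℝ)} (hC : C ∈ P) {i i' : Fin I.n}
    {k : Fin (I.sz i + 1)} {k' : Fin (I.sz i' + 1)}
    (h : I.midPt i k ∈ C) (h' : I.midPt i' k' ∈ C) : i = i' := by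
  by_contra hii
  have hdist := (hP.2 C hC).2 _ h _ h'
  simp only [midPt] at hdist
  erw [spiderDist_ne (fun hc => hii (Sum.inl.inj hc))] at hdist
  have h1 := I.cast_a_lt_L i k
  have h2 := I.cast_a_lt_L i' k'
  linarith

lemma endPt_not_with_last {P : Multiset (Multiset (I.Leg × ℝ))} (hP : I.Feasible P)
    {C : Multiset (I.Leg × ℝ)} (hC : C ∈ P) {i : Fin I.n}
    (hmem : I.midPt i (Fin.last (I.sz i)) ∈ C) : I.endPt i ∉ C := by
  intro hend
  have hdist := (hP.2 C hC).2 _ hend _ hmem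
  simp only [endPt, midPt, endCoord] at hdist
  erw [spiderDist_same] at hdist
  have hL1 := I.cast_one_le_L
  rw [abs_of_nonneg (by ring_nf; linarith)] at hdist
  linarith

lemma mem_cluster_classify {P : Multiset (Multiset (I.Leg × ℝ))} (hP : I.Feasible P)
    {C : Multiset (I.Leg × ℝ)} (hC : C ∈ P) {i : Fin I.n} (hend : I.endPt i ∉ C)
    {j : Fin I.m} {k₁ : Fin (I.sz i + 1)}
    (hk₁ : I.midPt i k₁ ∈ C) (hk₁b : I.a i k₁ ≤ I.b j) :
    ∀ u ∈ C, I.QmP i u ∨ I.QsP j u := by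
  intro u hu
  have husers : u ∈ I.users := by
    rw [← hP.1]
    exact Multiset.mem_of_le (Multiset.le_sum_of_mem hC) hu
  have hdist := (hP.2 C hC).2 u hu (I.midPt i k₁) hk₁
  have hL1 := I.cast_one_le_L
  have hak := I.cast_a_lt_L i k₁
  have hak0 := I.cast_a_pos i k₁
  rcases I.mem_users_cases husers with ⟨i', rfl⟩ | ⟨i', k, rfl⟩ | ⟨s, rfl⟩ | ⟨t, rfl⟩
  · by_cases hii : i' = i
    · subst hii
      exact absurd hu hend
    · exfalso
      simp only [endPt, midPt, endCoord] at hdist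
      erw [spiderDist_ne (fun hc => hii (Sum.inl.inj hc))] at hdist
      have hA := I.cast_A_lt_L i'
      have hA' : (I.a i' (Fin.last (I.sz i')) : ℝ) < I.L := hA
      linarith
  · by_cases hii : i' = i
    · subst hii
      exact Or.inl ⟨k, rfl⟩
    · exfalso
      simp only [midPt] at hdist
      erw [spiderDist_ne (fun hc => hii (Sum.inl.inj hc))] at hdist
      have h1 := I.cast_a_lt_L i' k
      linarith
  · refine Or.inr ⟨s, ?_, rfl⟩
    simp only [sBPt, midPt] at hdist
    erw [spiderDist_ne (fun hc => Sum.inr_ne_inl hc)] at hdist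
    have hreal : (I.bprev s.1 : ℝ) + 1 ≤ I.a i k₁ := by linarith
    have hnat : I.bprev s.1 + 1 ≤ I.a i k₁ := by exact_mod_cast hreal
    by_contra hlt
    have hjs : j < s.1 := lt_of_not_ge hlt
    have hjs' : (j : ℕ) < (s.1 : ℕ) := hjs
    have hs1 : ¬ ((s.1 : ℕ) = 0) := by omega
    have hb : I.bprev s.1 = I.b ⟨(s.1 : ℕ) - 1, by
        have := (s.1).isLt; omega⟩ := if_neg hs1
    have hble : I.b j ≤ I.b ⟨(s.1 : ℕ) - 1, by have := (s.1).isLt; omega⟩ :=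
      I.bmono.monotone (Fin.le_def.mpr (by simp only []; omega))
    omega
  · exfalso
    simp only [sLPt, midPt] at hdist
    erw [spiderDist_ne (fun hc => Sum.inr_ne_inl hc)] at hdist
    linarith

end ArrearsInstance


namespace ArrearsInstance

variable (I : ArrearsInstance)

/-- The users lying in clusters avoiding the end users of leg `i`. -/
noncomputable def Outm (P : Multiset (Multiset (I.Leg × ℝ))) (i : Fin I.n) : Multiset (I.Leg × ℝ) :=
  (P.filter (fun C => I.endPt i ∉ C)).sum

/-- The relevant clusters for leg `i` and budget `j`. -/
def RiP (j : Fin I.m) (i : Fin I.n) (C : Multiset (I.Leg × ℝ)) : Prop :=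
  I.endPt i ∉ C ∧ ∃ k, I.midPt i k ∈ C ∧ I.a i k ≤ I.b j

noncomputable instance decRiP (j : Fin I.m) (i : Fin I.n) : DecidablePred (I.RiP j i) :=
  fun _ => Classical.dec _

/-- The forward direction: a feasible solution yields a yes-certificate. -/
lemma yes_of_feasible {P : Multiset (Multiset (I.Leg × ℝ))} (hP : I.Feasible P) :
    ∃ z : (i : Fin I.n) → Fin (I.sz i + 1),
      ∀ j : Fin I.m,
        (∑ i : Fin I.n, if I.a i (z i) ≤ I.b j then I.p i (z i) else 0) ≤ I.q j := by
  have hOut_le : ∀ i, I.Outm P i ≤ I.users := by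
    intro i
    rw [← hP.1, Outm]
    conv_rhs => rw [← Multiset.filter_add_not (fun C => I.endPt i ∉ C) P]
    rw [Multiset.sum_add]
    exact Multiset.le_add_right _ _
  have hlastOut : ∀ i, 0 < (I.Outm P i).count (I.midPt i (Fin.last (I.sz i))) := by
    intro i
    have hmemusers : I.midPt i (Fin.last (I.sz i)) ∈ I.users := by
      rw [← Multiset.count_pos, I.count_users_midPt_last]
      have := I.pA_lt_r i
      omega
    rw [← hP.1] at hmemusers
    obtain ⟨C, hC, hmC⟩ := mem_msum.1 hmemusers
    have hend := I.endPt_not_with_last hP hC hmC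
    have hCf : C ∈ P.filter (fun C => I.endPt i ∉ C) := Multiset.mem_filter.2 ⟨hC, hend⟩
    rw [Multiset.count_pos, Outm]
    exact mem_msum.2 ⟨C, hCf, hmC⟩
  have hSne : ∀ i, (Finset.univ.filter
      (fun k : Fin (I.sz i + 1) => 0 < (I.Outm P i).count (I.midPt i k))).Nonempty := fun i =>
    ⟨Fin.last _, Finset.mem_filter.2 ⟨Finset.mem_univ _, hlastOut i⟩⟩
  let z : ∀ i : Fin I.n, Fin (I.sz i + 1) := fun i => (Finset.univ.filter
      (fun k : Fin (I.sz i + 1) => 0 < (I.Outm P i).count (I.midPt i k))).min' (hSne i)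
  have hz1 : ∀ i, 0 < (I.Outm P i).count (I.midPt i (z i)) := fun i =>
    (Finset.mem_filter.1 (Finset.min'_mem _ (hSne i))).2
  have hz2 : ∀ i k, 0 < (I.Outm P i).count (I.midPt i k) → z i ≤ k := by
    intro i k h
    exact Finset.min'_le _ k (Finset.mem_filter.2 ⟨Finset.mem_univ _, h⟩)
  refine ⟨z, fun j => ?_⟩
  have hA := countP_msum (I.QsP j) P
  rw [hP.1, I.countP_users_Qs] at hA
  have hB2 : ∀ i, ∀ C ∈ P.filter (I.RiP j i),
      Multiset.card C = Multiset.countP (I.QsP j) C + Multiset.countP (I.QmP i) C := by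
    intro i C hCf
    have hC := Multiset.mem_of_mem_filter hCf
    obtain ⟨hend, k₁, hk₁, hk₁b⟩ := Multiset.of_mem_filter hCf
    have hclass := I.mem_cluster_classify hP hC hend hk₁ hk₁b
    have e1 : Multiset.card C = Multiset.card (C.filter (I.QsP j))
        + Multiset.card (C.filter (fun u => ¬ I.QsP j u)) := by
      rw [← Multiset.card_add, Multiset.filter_add_not]
    have e2 : C.filter (fun u => ¬ I.QsP j u) = C.filter (I.QmP i) := by
      refine Multiset.filter_congr fun u hu => ?_
      constructor
      · intro hn
        rcases hclass u hu with h | h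
        · exact h
        · exact absurd h hn
      · intro hm hs
        exact I.not_Qm_and_Qs hm hs
    rw [e1, e2, ← Multiset.countP_eq_card_filter, ← Multiset.countP_eq_card_filter]
  have hB3 : ∀ i, ((P.filter (I.RiP j i)).map (Multiset.countP (I.QmP i))).sum
      ≤ I.r - I.p i (z i) := by
    intro i
    have hle1 : P.filter (I.RiP j i) ≤ P.filter (fun C => I.endPt i ∉ C) :=
      Multiset.monotone_filter_right P (fun C hc => hc.1)
    calc ((P.filter (I.RiP j i)).map (Multiset.countP (I.QmP i))).sum
        ≤ ((P.filter (fun C => I.endPt i ∉ C)).map (Multiset.countP (I.QmP i))).sum :=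
          msum_le_msum _ _ (Multiset.map_le_map hle1)
      _ = (I.Outm P i).countP (I.QmP i) := (countP_msum _ _).symm
      _ = ∑ k : Fin (I.sz i + 1), (I.Outm P i).count (I.midPt i k) :=
          countP_eq_sum_count (I.midPt i) (fun k k' h => I.midPt_inj h) (I.QmP i)
            (fun u => Iff.rfl) _
      _ = ∑ k : Fin (I.sz i + 1),
            (if z i ≤ k then (I.Outm P i).count (I.midPt i k) else 0) := by
          refine Finset.sum_congr rfl fun k _ => ?_
          by_cases h : z i ≤ k
          · rw [if_pos h]
          · rw [if_neg h]
            rcases Nat.eq_zero_or_pos ((I.Outm P i).count (I.midPt i k)) with h0 | h0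
            · exact h0
            · exact absurd (hz2 i k h0) h
      _ ≤ ∑ k : Fin (I.sz i + 1),
            (if z i ≤ k then I.users.count (I.midPt i k) else 0) := by
          refine Finset.sum_le_sum fun k _ => ?_
          by_cases h : z i ≤ k
          · rw [if_pos h, if_pos h]
            exact Multiset.count_le_of_le _ (hOut_le i)
          · rw [if_neg h, if_neg h]
      _ = I.r - I.p i (z i) := I.sum_count_mid_ge i (z i)
  have hB : ∀ i, I.a i (z i) ≤ I.b j →
      I.p i (z i) ≤ ((P.filter (I.RiP j i)).map (Multiset.countP (I.QsP j))).sum := by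
    intro i hab
    obtain ⟨C₀, hC₀f, hmC₀⟩ : ∃ C ∈ P.filter (fun C => I.endPt i ∉ C), I.midPt i (z i) ∈ C := by
      have h := hz1 i
      rw [Multiset.count_pos, Outm] at h
      exact mem_msum.1 h
    have hC₀Ri : C₀ ∈ P.filter (I.RiP j i) :=
      Multiset.mem_filter.2 ⟨Multiset.mem_of_mem_filter hC₀f,
        (Multiset.mem_filter.1 hC₀f).2, z i, hmC₀, hab⟩
    have hcard : I.r ≤ ((P.filter (I.RiP j i)).map Multiset.card).sum := by
      have h1 : Multiset.card C₀ ∈ (P.filter (I.RiP j i)).map Multiset.card :=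
        Multiset.mem_map_of_mem _ hC₀Ri
      have h2 := Multiset.le_sum_of_mem h1
      have h3 := (hP.2 C₀ (Multiset.mem_of_mem_filter hC₀Ri)).1
      omega
    have hsplit : ((P.filter (I.RiP j i)).map Multiset.card).sum
        = ((P.filter (I.RiP j i)).map (Multiset.countP (I.QsP j))).sum
          + ((P.filter (I.RiP j i)).map (Multiset.countP (I.QmP i))).sum := by
      rw [← Multiset.sum_map_add]
      exact congrArg Multiset.sum (Multiset.map_congr rfl fun C hC => hB2 i C hC)
    have h3 := hB3 i
    have h4 := I.p_lt_r i (z i)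
    omega
  have hC2 : ∑ i : Fin I.n, ((P.filter (I.RiP j i)).map (Multiset.countP (I.QsP j))).sum
      ≤ (P.map (Multiset.countP (I.QsP j))).sum := by
    have e : ∀ i : Fin I.n, ((P.filter (I.RiP j i)).map (Multiset.countP (I.QsP j))).sum
        = (P.map (fun C => if I.RiP j i C then Multiset.countP (I.QsP j) C else 0)).sum :=
      fun i => sum_map_filter_eq (I.RiP j i) _ P
    rw [Finset.sum_congr rfl fun i _ => e i,
      sum_finsum_swap Finset.univ (fun i C => if I.RiP j i C then
        Multiset.countP (I.QsP j) C else 0) P]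
    refine Multiset.sum_map_le_sum_map _ _ fun C hC => ?_
    by_cases hex : ∃ i, I.RiP j i C
    · obtain ⟨i₀, hi₀⟩ := hex
      rw [Finset.sum_eq_single i₀]
      · rw [if_pos hi₀]
      · intro i' _ hne
        rw [if_neg]
        intro hri'
        obtain ⟨_, k', hk', _⟩ := hri'
        obtain ⟨_, k₀, hk₀, _⟩ := hi₀
        exact hne (I.leg_unique hP hC hk' hk₀)
      · intro h
        exact absurd (Finset.mem_univ _) h
    · rw [Finset.sum_eq_zero fun i _ => if_neg (fun h => hex ⟨i, h⟩)]
      exact Nat.zero_le _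
  calc (∑ i : Fin I.n, if I.a i (z i) ≤ I.b j then I.p i (z i) else 0)
      ≤ ∑ i : Fin I.n, ((P.filter (I.RiP j i)).map (Multiset.countP (I.QsP j))).sum := by
        refine Finset.sum_le_sum fun i _ => ?_
        by_cases h : I.a i (z i) ≤ I.b j
        · rw [if_pos h]
          exact hB i h
        · rw [if_neg h]
          exact Nat.zero_le _
    _ ≤ (P.map (Multiset.countP (I.QsP j))).sum := hC2
    _ = I.q j := hA.symm

end ArrearsInstance

/-- The constructed instance `I′` has a feasible solution if and only if the arrears
instance is a yes-instance: there is a choice `z i` of an option from every payment duty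
`S i` such that, for every budget constraint `j`, the total amount of the chosen payments
due by day `b j` is at most `q j`. -/
theorem feasible_iff_arrears_yes (I : ArrearsInstance) :
    (∃ P : Multiset (Multiset (I.Leg × ℝ)), I.Feasible P) ↔
    (∃ z : (i : Fin I.n) → Fin (I.sz i + 1),
      ∀ j : Fin I.m,
        (∑ i : Fin I.n, if I.a i (z i) ≤ I.b j then I.p i (z i) else 0) ≤ I.q j) := by
  constructor
  · rintro ⟨P, hP⟩
    exact I.yes_of_feasible hP
  · rintro ⟨z, hq⟩
    exact I.feasible_of_yes z hq
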